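/- (Concrete system with a coexistence positive solution) There exist twice continuously differentiable functions x, y : [0,1] → [0,∞), neither identically zero, such that for all t ∈ [0,1]: x''(t) + (t+1)/(y(t)+1) + x(t)·arctan(x(t)) = 0, y''(t) + t/(e^{−x(t)} + 1) + (1/3)·√(y(t)) = 0, and x'(0) = x(1) = y'(0) = y(1) = 0. -/

import Mathlib

open Set Real

section CoexDev
open intervalIntegral MeasureTheory Filter Topology

noncomputable section
namespace Coex


/-- clamp to [0,1] -/
def cl (t : ℝ) : ℝ := max 0 (min 1 t)

lemma cl_mem (t : ℝ) : cl t ∈ Icc (0:ℝ) 1 := by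
  constructor
  · exact le_max_left _ _
  · simp only [cl, max_le_iff]
    constructor
    · norm_num
    · exact min_le_left _ _

lemma cl_eq {t : ℝ} (ht : t ∈ Icc (0:ℝ) 1) : cl t = t := by
  simp only [cl, min_eq_right ht.2, max_eq_right ht.1]

lemma continuous_cl : Continuous cl :=
  continuous_const.max (continuous_const.min continuous_id)

/-- sqrt difference bound -/
lemma sqrt_diff_le {a b m : ℝ} (hm : 0 < m) (ha : m ≤ a) (hb : m ≤ b) :
    |Real.sqrt a - Real.sqrt b| ≤ |a - b| / (2 * Real.sqrt m) := by
  have ha0 : (0:ℝ) ≤ a := hm.le.trans ha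
  have hb0 : (0:ℝ) ≤ b := hm.le.trans hb
  have hs : 0 < Real.sqrt a + Real.sqrt b := by
    have := Real.sqrt_pos.2 (hm.trans_le ha)
    positivity
  have key : (Real.sqrt a - Real.sqrt b) * (Real.sqrt a + Real.sqrt b) = a - b := by
    have h1 : Real.sqrt a * Real.sqrt a = a := Real.mul_self_sqrt ha0
    have h2 : Real.sqrt b * Real.sqrt b = b := Real.mul_self_sqrt hb0
    ring_nf
    nlinarith [h1, h2]
  have heq : |Real.sqrt a - Real.sqrt b| = |a - b| / (Real.sqrt a + Real.sqrt b) := by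
    rw [eq_div_iff hs.ne', ← abs_of_pos hs, ← abs_mul, key]
  rw [heq]
  apply div_le_div_of_nonneg_left (abs_nonneg _) (by positivity)
  have h1 : Real.sqrt m ≤ Real.sqrt a := Real.sqrt_le_sqrt ha
  have h2 : Real.sqrt m ≤ Real.sqrt b := Real.sqrt_le_sqrt hb
  linarith

lemma arctan_le_pi_div_three {x : ℝ} (hx : x ≤ 3/2) : arctan x ≤ π / 3 := by
  have h3 : Real.arctan (Real.sqrt 3) = π / 3 := by
    rw [show Real.sqrt 3 = Real.tan (π/3) from (Real.tan_pi_div_three).symm]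
    exact Real.arctan_tan (by linarith [Real.pi_pos]) (by linarith [Real.pi_pos])
  have h32 : (3/2 : ℝ) ≤ Real.sqrt 3 := by
    rw [show (3/2 : ℝ) = Real.sqrt ((3/2)^2) from (Real.sqrt_sq (by norm_num)).symm]
    exact Real.sqrt_le_sqrt (by norm_num)
  calc arctan x ≤ arctan (Real.sqrt 3) := Real.arctan_strictMono.monotone (hx.trans h32)
    _ = π / 3 := h3

/-- Lipschitz bound for x * arctan x on [0, 3/2] -/
lemma lip_xatan {a b : ℝ} (ha : a ∈ Icc (0:ℝ) (3/2)) (hb : b ∈ Icc (0:ℝ) (3/2)) :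
    |a * arctan a - b * arctan b| ≤ (π/3 + 1/2) * |a - b| := by
  have hder : ∀ x ∈ Icc (0:ℝ) (3/2), HasDerivWithinAt (fun x => x * arctan x)
      (arctan x + x * (1 / (1 + x^2))) (Icc (0:ℝ) (3/2)) x := by
    intro x hx
    have := (hasDerivAt_id x).mul (Real.hasDerivAt_arctan x)
    exact this.hasDerivWithinAt.congr_deriv (by simp)
  have hbound : ∀ x ∈ Icc (0:ℝ) (3/2), ‖arctan x + x * (1 / (1 + x^2))‖ ≤ π/3 + 1/2 := by
    intro x hx
    have h1 : arctan x ≤ π/3 := arctan_le_pi_div_three hx.2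
    have h2 : x * (1 / (1 + x^2)) ≤ 1/2 := by
      rw [mul_one_div, div_le_iff₀ (by positivity)]
      nlinarith [sq_nonneg (x - 1)]
    have h3 : 0 ≤ arctan x := by
      rw [show (0:ℝ) = arctan 0 by simp]
      exact Real.arctan_strictMono.monotone hx.1
    have h4 : 0 ≤ x * (1 / (1 + x^2)) := mul_nonneg hx.1 (by positivity)
    rw [Real.norm_eq_abs, abs_of_nonneg (by linarith)]
    linarith
  have := Convex.norm_image_sub_le_of_norm_hasDerivWithin_le hder hbound
    (convex_Icc _ _) hb ha
  simpa [Real.norm_eq_abs] using this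

/-- Lipschitz bound for the sigmoid 1/(e^{-x}+1) on [0,∞) -/
lemma lip_sig {a b : ℝ} (ha : a ∈ Ici (0:ℝ)) (hb : b ∈ Ici (0:ℝ)) :
    |1 / (Real.exp (-a) + 1) - 1 / (Real.exp (-b) + 1)| ≤ (1/2) * |a - b| := by
  have hder : ∀ x ∈ Ici (0:ℝ), HasDerivWithinAt (fun x => 1 / (Real.exp (-x) + 1))
      (Real.exp (-x) / (Real.exp (-x) + 1)^2) (Ici (0:ℝ)) x := by
    intro x hx
    have h1 : HasDerivAt (fun x : ℝ => Real.exp (-x) + 1) (-Real.exp (-x)) x := by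
      simpa using ((Real.hasDerivAt_exp (-x)).comp x (hasDerivAt_neg x)).add_const 1
    have h2 : Real.exp (-x) + 1 ≠ 0 := by positivity
    have := h1.inv h2
    simp only [one_div]
    refine this.hasDerivWithinAt.congr_deriv ?_
    ring
  have hbound : ∀ x ∈ Ici (0:ℝ), ‖Real.exp (-x) / (Real.exp (-x) + 1)^2‖ ≤ 1/2 := by
    intro x hx
    have he : 0 < Real.exp (-x) := Real.exp_pos _
    rw [Real.norm_eq_abs, abs_of_nonneg (by positivity), div_le_iff₀ (by positivity)]
    nlinarith [sq_nonneg (Real.exp (-x) - 1)]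
  have := Convex.norm_image_sub_le_of_norm_hasDerivWithin_le hder hbound
    (convex_Ici _) hb ha
  simpa [Real.norm_eq_abs] using this

/-- extend a ≤ from Ico to Icc by continuity at right endpoint -/
lemma le_of_Ico {f g : ℝ → ℝ} (hf : Continuous f) (hg : Continuous g)
    (h : ∀ σ ∈ Ico (0:ℝ) 1, f σ ≤ g σ) : ∀ σ ∈ Icc (0:ℝ) 1, f σ ≤ g σ := by
  intro σ hσ
  rcases lt_or_eq_of_le hσ.2 with h1 | h1
  · exact h σ ⟨hσ.1, h1⟩
  · have hfT : Tendsto f (𝓝[<] (1:ℝ)) (𝓝 (f 1)) := (hf.tendsto 1).mono_left nhdsWithin_le_nhds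
    have hgT : Tendsto g (𝓝[<] (1:ℝ)) (𝓝 (g 1)) := (hg.tendsto 1).mono_left nhdsWithin_le_nhds
    have hmem : Ioo (0:ℝ) 1 ∈ 𝓝[<] (1:ℝ) := Ioo_mem_nhdsLT_of_mem ⟨by norm_num, le_refl 1⟩
    have hev : ∀ᶠ x in 𝓝[<] (1:ℝ), f x ≤ g x := by
      filter_upwards [hmem] with x hx
      exact h x ⟨hx.1.le, hx.2⟩
    rw [h1]
    exact le_of_tendsto_of_tendsto hfT hgT hev



lemma int_linear (c d σ : ℝ) : ∫ s in (0:ℝ)..σ, (c * s + d) = c * σ^2 / 2 + d * σ := by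
  have h : ∀ x ∈ uIcc (0:ℝ) σ, HasDerivAt (fun s => c * s^2 / 2 + d * s) (c * x + d) x := by
    intro x _
    have h1 : HasDerivAt (fun s : ℝ => c * s^2 / 2 + d * s) (c * ((2:ℕ) * x ^ (2-1)) / 2 + d * 1) x :=
      (((hasDerivAt_pow 2 x).const_mul c).div_const 2).add ((hasDerivAt_id x).const_mul d)
    convert h1 using 1
    push_cast; ring
  rw [intervalIntegral.integral_eq_sub_of_hasDerivAt h ((by fun_prop : Continuous fun s : ℝ => c * s + d).intervalIntegrable _ _)]
  ring

lemma int_quad (a b t : ℝ) : ∫ σ in t..(1:ℝ), (a * σ^2 + b * σ) = (a/3 + b/2) - (a * t^3/3 + b * t^2/2) := by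
  have h : ∀ x ∈ uIcc t (1:ℝ), HasDerivAt (fun σ => a * σ^3 / 3 + b * σ^2 / 2) (a * x^2 + b * x) x := by
    intro x _
    have h1 : HasDerivAt (fun σ : ℝ => a * σ^3 / 3 + b * σ^2 / 2)
        (a * ((3:ℕ) * x^(3-1)) / 3 + b * ((2:ℕ) * x^(2-1)) / 2) x :=
      (((hasDerivAt_pow 3 x).const_mul a).div_const 3).add (((hasDerivAt_pow 2 x).const_mul b).div_const 2)
    convert h1 using 1
    push_cast; ring
  rw [intervalIntegral.integral_eq_sub_of_hasDerivAt h ((by fun_prop : Continuous fun σ : ℝ => a * σ^2 + b * σ).intervalIntegrable _ _)]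
  ring

/-- derivative of w ↦ w √w -/
lemma hasDerivAt_mul_sqrt {w : ℝ} (hw : 0 ≤ w) :
    HasDerivAt (fun w : ℝ => w * Real.sqrt w) (3/2 * Real.sqrt w) w := by
  rcases eq_or_lt_of_le hw with h | h
  · rw [hasDerivAt_iff_tendsto_slope]
    have hslope : ∀ x : ℝ, x ≠ 0 → slope (fun w : ℝ => w * Real.sqrt w) 0 x = Real.sqrt x := by
      intro x hx
      simp [slope, hx]
    rw [← h]
    simp only [Real.sqrt_zero, mul_zero]
    have hT : Tendsto (fun x : ℝ => Real.sqrt x) (𝓝[≠] 0) (𝓝 0) := by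
      have := (Real.continuous_sqrt.tendsto 0).mono_left (nhdsWithin_le_nhds (s := {(0:ℝ)}ᶜ))
      simpa using this
    refine hT.congr' ?_
    filter_upwards [self_mem_nhdsWithin] with x hx
    rw [hslope x hx]
  · have h1 := (hasDerivAt_id w).mul (Real.hasDerivAt_sqrt h.ne')
    have hs : Real.sqrt w ≠ 0 := (Real.sqrt_pos.2 h).ne'
    refine h1.congr_deriv ?_
    have hms : Real.sqrt w * Real.sqrt w = w := Real.mul_self_sqrt hw
    field_simp
    rw [id_eq]
    nlinarith [hms]

/-- derivative of σ ↦ (1-σ)√(1-σ) for σ ≤ 1 -/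
lemma hasDerivAt_one_sub_mul_sqrt {σ : ℝ} (hσ : σ ≤ 1) :
    HasDerivAt (fun σ : ℝ => (1 - σ) * Real.sqrt (1 - σ)) (-(3/2 * Real.sqrt (1 - σ))) σ := by
  have h1 : HasDerivAt (fun σ : ℝ => 1 - σ) (-1) σ := by
    simpa using (hasDerivAt_id σ).const_sub 1
  have h2 := (hasDerivAt_mul_sqrt (by linarith : (0:ℝ) ≤ 1 - σ)).comp σ h1
  refine h2.congr_deriv ?_; ring

lemma int_sqrt_main {t : ℝ} (ht : t ∈ Icc (0:ℝ) 1) :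
    ∫ σ in t..(1:ℝ), (2 - 2 * Real.sqrt (1 - σ)) ≤ 2/3 := by
  have h : ∀ x ∈ uIcc t (1:ℝ), HasDerivAt (fun σ => 2*σ + (4/3)*((1-σ)*Real.sqrt (1-σ)))
      (2 - 2 * Real.sqrt (1 - x)) x := by
    intro x hx
    rw [uIcc_of_le ht.2] at hx
    have h4 := ((hasDerivAt_id x).const_mul 2).add ((hasDerivAt_one_sub_mul_sqrt hx.2).const_mul (4/3 : ℝ))
    refine h4.congr_deriv ?_
    push_cast; ring
  rw [intervalIntegral.integral_eq_sub_of_hasDerivAt h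
    ((by fun_prop : Continuous fun σ : ℝ => 2 - 2 * Real.sqrt (1 - σ)).intervalIntegrable _ _)]
  have h1 : 0 ≤ Real.sqrt (1 - t) := Real.sqrt_nonneg _
  have h2 : 0 ≤ t := ht.1
  have hq : Real.sqrt (1 - t) * Real.sqrt (1 - t) = 1 - t := Real.mul_self_sqrt (by linarith [ht.2])
  have key : 0 ≤ (Real.sqrt (1-t) - 1)^2 * (2 * Real.sqrt (1-t) + 1) :=
    mul_nonneg (sq_nonneg _) (by linarith)
  simp only [sub_self, Real.sqrt_zero, mul_zero, zero_mul]
  nlinarith [key, hq]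

/-- FTC for the comparison on [0,σ], σ < 1 -/
lemma int_inner_sqrt {σ : ℝ} (h0 : 0 ≤ σ) (h1 : σ < 1) (c : ℝ) :
    ∫ s in (0:ℝ)..σ, (3 * s + c / Real.sqrt (1 - s))
      = 3/2 * σ^2 + c * (2 - 2 * Real.sqrt (1 - σ)) := by
  have h : ∀ x ∈ uIcc (0:ℝ) σ, HasDerivAt (fun s => 3/2 * s^2 - 2 * c * Real.sqrt (1 - s))
      (3 * x + c / Real.sqrt (1 - x)) x := by
    intro x hx
    rw [uIcc_of_le h0] at hx
    have hx1 : x < 1 := lt_of_le_of_lt hx.2 h1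
    have hne : (1 - x) ≠ 0 := by linarith
    have hd1 : HasDerivAt (fun s : ℝ => 1 - s) (-1) x := by simpa using (hasDerivAt_id x).const_sub 1
    have hd2 := (Real.hasDerivAt_sqrt hne).comp x hd1
    have hd3 : HasDerivAt (fun s : ℝ => 3/2 * s^2) (3/2 * ((2:ℕ) * x^(2-1))) x :=
      ((hasDerivAt_pow 2 x).const_mul (3/2:ℝ))
    have hd4 := hd3.sub (hd2.const_mul (2*c))
    refine hd4.congr_deriv ?_
    · have hs : Real.sqrt (1 - x) ≠ 0 := (Real.sqrt_pos.2 (by linarith)).ne'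
      field_simp
      ring
  have hco : ContinuousOn (fun s : ℝ => 3 * s + c / Real.sqrt (1 - s)) (uIcc (0:ℝ) σ) := by
    rw [uIcc_of_le h0]
    apply ContinuousOn.add (by fun_prop)
    apply ContinuousOn.div continuousOn_const
    · fun_prop
    · intro x hx
      exact (Real.sqrt_pos.2 (by rcases hx with ⟨_, h2⟩; linarith)).ne'
  rw [intervalIntegral.integral_eq_sub_of_hasDerivAt h (hco.intervalIntegrable)]
  have hs0 : Real.sqrt (1 - 0) = 1 := by norm_num
  rw [hs0]
  ring




abbrev B := BoundedContinuousFunction ℝ (ℝ × ℝ)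

def S : Set B := {u | ∀ t ∈ Icc (0:ℝ) 1,
  0 ≤ (u t).1 ∧ (u t).1 ≤ 3/2 ∧ (1 - t^3)/2 ≤ (u t).2 ∧ (u t).2 ≤ 6}

def P (u : B) (s : ℝ) : ℝ × ℝ := u (cl s)

lemma P_bounds {u : B} (hu : u ∈ S) (s : ℝ) :
    0 ≤ (P u s).1 ∧ (P u s).1 ≤ 3/2 ∧ 0 ≤ (P u s).2 ∧ (P u s).2 ≤ 6 := by
  have h := hu (cl s) (cl_mem s)
  have h0 : (0:ℝ) ≤ (1 - (cl s)^3)/2 := by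
    have := (cl_mem s).2
    have := (cl_mem s).1
    nlinarith [pow_le_one₀ (cl_mem s).1 (cl_mem s).2 (n := 3)]
  exact ⟨h.1, h.2.1, h0.trans h.2.2.1, h.2.2.2⟩

lemma P_low {u : B} (hu : u ∈ S) {s : ℝ} (hs : s ∈ Icc (0:ℝ) 1) :
    (1 - s^3)/2 ≤ (P u s).2 := by
  rw [P, cl_eq hs]
  exact (hu s hs).2.2.1

lemma P_eq {u : B} {s : ℝ} (hs : s ∈ Icc (0:ℝ) 1) : P u s = u s := by
  rw [P, cl_eq hs]

def f1 (u : B) (s : ℝ) : ℝ := (s + 1) / ((P u s).2 / 6 + 1) + (P u s).1 * arctan (P u s).1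
def f2 (u : B) (s : ℝ) : ℝ := 6 * s / (Real.exp (-(P u s).1) + 1) + 2 * Real.sqrt ((P u s).2 / 6)

lemma cont_P (u : B) : Continuous (P u) := u.continuous.comp continuous_cl

lemma cont_f1 {u : B} (hu : u ∈ S) : Continuous (f1 u) := by
  apply Continuous.add
  · apply Continuous.div (by fun_prop) (by have := cont_P u; fun_prop)
    intro s
    have := (P_bounds hu s).2.2.1
    positivity
  · have := cont_P u
    have harc : Continuous (Real.arctan) := Real.continuous_arctan
    fun_prop

lemma cont_f2 {u : B} (hu : u ∈ S) : Continuous (f2 u) := by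
  apply Continuous.add
  · apply Continuous.div (by fun_prop) (by have := cont_P u; fun_prop)
    intro s
    positivity
  · have := cont_P u
    fun_prop

def G1 (u : B) (σ : ℝ) : ℝ := ∫ s in (0:ℝ)..σ, f1 u s
def G2 (u : B) (σ : ℝ) : ℝ := ∫ s in (0:ℝ)..σ, f2 u s
def V1 (u : B) (t : ℝ) : ℝ := ∫ σ in t..(1:ℝ), G1 u σ
def V2 (u : B) (t : ℝ) : ℝ := ∫ σ in t..(1:ℝ), G2 u σ

lemma hasDerivAt_primitive {f : ℝ → ℝ} (hf : Continuous f) (a b : ℝ) :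
    HasDerivAt (fun t => ∫ s in a..t, f s) (f b) b :=
  intervalIntegral.integral_hasDerivAt_right (hf.intervalIntegrable _ _)
    (hf.stronglyMeasurableAtFilter _ _) hf.continuousAt

lemma hasDerivAt_G1 {u : B} (hu : u ∈ S) (σ : ℝ) : HasDerivAt (G1 u) (f1 u σ) σ :=
  hasDerivAt_primitive (cont_f1 hu) 0 σ

lemma hasDerivAt_G2 {u : B} (hu : u ∈ S) (σ : ℝ) : HasDerivAt (G2 u) (f2 u σ) σ :=
  hasDerivAt_primitive (cont_f2 hu) 0 σ

lemma cont_G1 {u : B} (hu : u ∈ S) : Continuous (G1 u) := by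
  have : Differentiable ℝ (G1 u) := fun σ => (hasDerivAt_G1 hu σ).differentiableAt
  exact this.continuous

lemma cont_G2 {u : B} (hu : u ∈ S) : Continuous (G2 u) := by
  have : Differentiable ℝ (G2 u) := fun σ => (hasDerivAt_G2 hu σ).differentiableAt
  exact this.continuous

lemma V1_eq_neg {u : B} : V1 u = fun t => -∫ σ in (1:ℝ)..t, G1 u σ := by
  funext t; rw [V1, intervalIntegral.integral_symm]

lemma V2_eq_neg {u : B} : V2 u = fun t => -∫ σ in (1:ℝ)..t, G2 u σ := by
  funext t; rw [V2, intervalIntegral.integral_symm]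

lemma hasDerivAt_V1 {u : B} (hu : u ∈ S) (t : ℝ) : HasDerivAt (V1 u) (-(G1 u t)) t := by
  rw [V1_eq_neg]
  exact (hasDerivAt_primitive (cont_G1 hu) 1 t).neg

lemma hasDerivAt_V2 {u : B} (hu : u ∈ S) (t : ℝ) : HasDerivAt (V2 u) (-(G2 u t)) t := by
  rw [V2_eq_neg]
  exact (hasDerivAt_primitive (cont_G2 hu) 1 t).neg

lemma cont_V1 {u : B} (hu : u ∈ S) : Continuous (V1 u) :=
  Differentiable.continuous (fun t => (hasDerivAt_V1 hu t).differentiableAt)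

lemma cont_V2 {u : B} (hu : u ∈ S) : Continuous (V2 u) :=
  Differentiable.continuous (fun t => (hasDerivAt_V2 hu t).differentiableAt)


/-! ### pointwise bounds -/

lemma pf1_low {u : B} (hu : u ∈ S) {s : ℝ} (hs : s ∈ Icc (0:ℝ) 1) : 0 ≤ f1 u s := by
  obtain ⟨h1, h2, h3, h4⟩ := P_bounds hu s
  have harc : 0 ≤ arctan (P u s).1 := by
    rw [show (0:ℝ) = arctan 0 by simp]
    exact Real.arctan_strictMono.monotone h1
  have : (0:ℝ) ≤ (s + 1) / ((P u s).2 / 6 + 1) := by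
    apply div_nonneg (by linarith [hs.1]) (by linarith)
  have := mul_nonneg h1 harc
  rw [f1]; linarith

lemma pf1_up {u : B} (hu : u ∈ S) {s : ℝ} (hs : s ∈ Icc (0:ℝ) 1) :
    f1 u s ≤ 1 * s + (1 + π/2) := by
  obtain ⟨h1, h2, h3, h4⟩ := P_bounds hu s
  have harc : arctan (P u s).1 ≤ π/3 := arctan_le_pi_div_three h2
  have harc0 : 0 ≤ arctan (P u s).1 := by
    rw [show (0:ℝ) = arctan 0 by simp]
    exact Real.arctan_strictMono.monotone h1
  have hd : (s + 1) / ((P u s).2 / 6 + 1) ≤ s + 1 := by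
    rw [div_le_iff₀ (by linarith)]
    nlinarith [hs.1]
  have hm : (P u s).1 * arctan (P u s).1 ≤ (3/2) * (π/3) := by
    apply mul_le_mul h2 harc harc0 (by norm_num)
  rw [f1]; nlinarith

lemma pf1_low2 {u : B} (hu : u ∈ S) {s : ℝ} (hs : s ∈ Icc (0:ℝ) 1) :
    (1/2) * s + 1/2 ≤ f1 u s := by
  obtain ⟨h1, h2, h3, h4⟩ := P_bounds hu s
  have harc : 0 ≤ arctan (P u s).1 := by
    rw [show (0:ℝ) = arctan 0 by simp]
    exact Real.arctan_strictMono.monotone h1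
  have hd : (s + 1) / 2 ≤ (s + 1) / ((P u s).2 / 6 + 1) := by
    apply div_le_div_of_nonneg_left (by linarith [hs.1]) (by linarith) (by linarith)
  have := mul_nonneg h1 harc
  rw [f1]; nlinarith

lemma pf2_low {u : B} (hu : u ∈ S) {s : ℝ} (hs : s ∈ Icc (0:ℝ) 1) :
    3 * s + 0 ≤ f2 u s := by
  obtain ⟨h1, h2, h3, h4⟩ := P_bounds hu s
  have he : Real.exp (-(P u s).1) ≤ 1 := Real.exp_le_one_iff.2 (by linarith)
  have he0 : 0 < Real.exp (-(P u s).1) := Real.exp_pos _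
  have hd : 6 * s / 2 ≤ 6 * s / (Real.exp (-(P u s).1) + 1) := by
    apply div_le_div_of_nonneg_left (by linarith [hs.1]) (by linarith) (by linarith)
  have hsq : 0 ≤ Real.sqrt ((P u s).2 / 6) := Real.sqrt_nonneg _
  rw [f2]; nlinarith

lemma pf2_up {u : B} (hu : u ∈ S) {s : ℝ} (hs : s ∈ Icc (0:ℝ) 1) :
    f2 u s ≤ 6 * s + 2 := by
  obtain ⟨h1, h2, h3, h4⟩ := P_bounds hu s
  have he0 : 0 < Real.exp (-(P u s).1) := Real.exp_pos _
  have hd : 6 * s / (Real.exp (-(P u s).1) + 1) ≤ 6 * s := by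
    rw [div_le_iff₀ (by linarith)]
    nlinarith [hs.1]
  have hsq : Real.sqrt ((P u s).2 / 6) ≤ 1 := Real.sqrt_le_one.2 (by linarith)
  rw [f2]; nlinarith

/-! ### bounds on G -/

lemma G1_low {u : B} (hu : u ∈ S) {σ : ℝ} (hσ : σ ∈ Icc (0:ℝ) 1) : 0 ≤ G1 u σ := by
  rw [G1]
  apply intervalIntegral.integral_nonneg hσ.1
  intro s hs
  exact pf1_low hu ⟨hs.1, hs.2.trans hσ.2⟩

lemma G1_low2 {u : B} (hu : u ∈ S) {σ : ℝ} (hσ : σ ∈ Icc (0:ℝ) 1) :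
    (1/2) * σ^2 / 2 + (1/2) * σ ≤ G1 u σ := by
  rw [G1, ← int_linear (1/2) (1/2) σ]
  apply intervalIntegral.integral_mono_on hσ.1
    ((by fun_prop : Continuous fun s : ℝ => (1:ℝ)/2 * s + 1/2).intervalIntegrable _ _)
    ((cont_f1 hu).intervalIntegrable _ _)
  intro s hs
  exact pf1_low2 hu ⟨hs.1, hs.2.trans hσ.2⟩

lemma G1_up {u : B} (hu : u ∈ S) {σ : ℝ} (hσ : σ ∈ Icc (0:ℝ) 1) :
    G1 u σ ≤ 1 * σ^2 / 2 + (1 + π/2) * σ := by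
  rw [G1, ← int_linear 1 (1 + π/2) σ]
  apply intervalIntegral.integral_mono_on hσ.1 ((cont_f1 hu).intervalIntegrable _ _)
    ((by fun_prop : Continuous fun s : ℝ => 1 * s + (1 + π/2)).intervalIntegrable _ _)
  intro s hs
  exact pf1_up hu ⟨hs.1, hs.2.trans hσ.2⟩

lemma G2_low {u : B} (hu : u ∈ S) {σ : ℝ} (hσ : σ ∈ Icc (0:ℝ) 1) :
    3 * σ^2 / 2 + 0 * σ ≤ G2 u σ := by
  rw [G2, ← int_linear 3 0 σ]
  apply intervalIntegral.integral_mono_on hσ.1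
    ((by fun_prop : Continuous fun s : ℝ => 3 * s + 0).intervalIntegrable _ _)
    ((cont_f2 hu).intervalIntegrable _ _)
  intro s hs
  exact pf2_low hu ⟨hs.1, hs.2.trans hσ.2⟩

lemma G2_up {u : B} (hu : u ∈ S) {σ : ℝ} (hσ : σ ∈ Icc (0:ℝ) 1) :
    G2 u σ ≤ 6 * σ^2 / 2 + 2 * σ := by
  rw [G2, ← int_linear 6 2 σ]
  apply intervalIntegral.integral_mono_on hσ.1 ((cont_f2 hu).intervalIntegrable _ _)
    ((by fun_prop : Continuous fun s : ℝ => 6 * s + 2).intervalIntegrable _ _)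
  intro s hs
  exact pf2_up hu ⟨hs.1, hs.2.trans hσ.2⟩

/-! ### bounds on V -/

lemma V1_low {u : B} (hu : u ∈ S) {t : ℝ} (ht : t ∈ Icc (0:ℝ) 1) : 0 ≤ V1 u t := by
  rw [V1]
  apply intervalIntegral.integral_nonneg ht.2
  intro σ hσ
  exact G1_low hu ⟨ht.1.trans hσ.1, hσ.2⟩

lemma V1_up {u : B} (hu : u ∈ S) {t : ℝ} (ht : t ∈ Icc (0:ℝ) 1) : V1 u t ≤ 3/2 := by
  have h1 : V1 u t ≤ ∫ σ in t..(1:ℝ), ((1/2) * σ^2 + (1 + π/2) * σ) := by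
    rw [V1]
    apply intervalIntegral.integral_mono_on ht.2 ((cont_G1 hu).intervalIntegrable _ _)
      ((by fun_prop : Continuous fun σ : ℝ => (1/2) * σ^2 + (1 + π/2) * σ).intervalIntegrable _ _)
    intro σ hσ
    have := G1_up hu ⟨ht.1.trans hσ.1, hσ.2⟩
    linarith
  rw [int_quad (1/2) (1 + π/2) t] at h1
  have hπ : π ≤ 3.15 := by linarith [Real.pi_lt_d2]
  have h2 : 0 ≤ t := ht.1
  nlinarith [pow_nonneg h2 3, pow_nonneg h2 2, Real.pi_pos]

lemma V1_zero_low {u : B} (hu : u ∈ S) : 1/3 ≤ V1 u 0 := by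
  have h1 : ∫ σ in (0:ℝ)..(1:ℝ), ((1/4) * σ^2 + (1/2) * σ) ≤ V1 u 0 := by
    rw [V1]
    apply intervalIntegral.integral_mono_on (by norm_num)
      ((by fun_prop : Continuous fun σ : ℝ => (1/4) * σ^2 + (1/2) * σ).intervalIntegrable _ _)
      ((cont_G1 hu).intervalIntegrable _ _)
    intro σ hσ
    have := G1_low2 hu hσ
    linarith
  rw [int_quad (1/4) (1/2) 0] at h1
  norm_num at h1
  linarith

lemma V2_low {u : B} (hu : u ∈ S) {t : ℝ} (ht : t ∈ Icc (0:ℝ) 1) : (1 - t^3)/2 ≤ V2 u t := by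
  have h1 : ∫ σ in t..(1:ℝ), ((3/2) * σ^2 + 0 * σ) ≤ V2 u t := by
    rw [V2]
    apply intervalIntegral.integral_mono_on ht.2
      ((by fun_prop : Continuous fun σ : ℝ => (3/2) * σ^2 + 0 * σ).intervalIntegrable _ _)
      ((cont_G2 hu).intervalIntegrable _ _)
    intro σ hσ
    have := G2_low hu ⟨ht.1.trans hσ.1, hσ.2⟩
    linarith
  rw [int_quad (3/2) 0 t] at h1
  linarith

lemma V2_up {u : B} (hu : u ∈ S) {t : ℝ} (ht : t ∈ Icc (0:ℝ) 1) : V2 u t ≤ 6 := by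
  have h1 : V2 u t ≤ ∫ σ in t..(1:ℝ), (3 * σ^2 + 2 * σ) := by
    rw [V2]
    apply intervalIntegral.integral_mono_on ht.2 ((cont_G2 hu).intervalIntegrable _ _)
      ((by fun_prop : Continuous fun σ : ℝ => 3 * σ^2 + 2 * σ).intervalIntegrable _ _)
    intro σ hσ
    have := G2_up hu ⟨ht.1.trans hσ.1, hσ.2⟩
    linarith
  rw [int_quad 3 2 t] at h1
  have h2 : 0 ≤ t := ht.1
  nlinarith [pow_nonneg h2 3, pow_nonneg h2 2]


/-! ### contraction estimates -/

lemma diff_comp1 (u v : B) (s : ℝ) : |(P u s).1 - (P v s).1| ≤ dist u v := by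
  have h := BoundedContinuousFunction.dist_coe_le_dist (f := u) (g := v) (cl s)
  rw [Prod.dist_eq] at h
  have := le_max_left (dist (u (cl s)).1 (v (cl s)).1) (dist (u (cl s)).2 (v (cl s)).2)
  rw [Real.dist_eq] at this
  exact le_trans this h

lemma diff_comp2 (u v : B) (s : ℝ) : |(P u s).2 - (P v s).2| ≤ dist u v := by
  have h := BoundedContinuousFunction.dist_coe_le_dist (f := u) (g := v) (cl s)
  rw [Prod.dist_eq] at h
  have := le_max_right (dist (u (cl s)).1 (v (cl s)).1) (dist (u (cl s)).2 (v (cl s)).2)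
  rw [Real.dist_eq] at this
  exact le_trans this h

lemma frac_diff {s z1 z2 : ℝ} (hs : 0 ≤ s) (h1 : 0 ≤ z1) (h2 : 0 ≤ z2) :
    |(s + 1)/(z1/6 + 1) - (s + 1)/(z2/6 + 1)| ≤ ((s + 1)/6) * |z1 - z2| := by
  have hd1 : (0:ℝ) < z1/6 + 1 := by linarith
  have hd2 : (0:ℝ) < z2/6 + 1 := by linarith
  have key : (s + 1)/(z1/6 + 1) - (s + 1)/(z2/6 + 1)
      = ((s + 1)/6) * (z2 - z1) / ((z1/6 + 1) * (z2/6 + 1)) := by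
    field_simp
    ring
  rw [key, abs_div, abs_mul]
  have hD : (1:ℝ) ≤ (z1/6 + 1) * (z2/6 + 1) := by nlinarith
  have hD0 : (0:ℝ) < (z1/6 + 1) * (z2/6 + 1) := by nlinarith
  rw [abs_of_pos hD0, abs_of_nonneg (by linarith : (0:ℝ) ≤ (s+1)/6)]
  calc (s + 1)/6 * |z2 - z1| / ((z1/6 + 1) * (z2/6 + 1))
      ≤ (s + 1)/6 * |z2 - z1| / 1 := by
        apply div_le_div_of_nonneg_left _ (by norm_num) hD
        positivity
    _ = (s + 1)/6 * |z1 - z2| := by rw [div_one, abs_sub_comm]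

lemma f1_diff {u v : B} (hu : u ∈ S) (hv : v ∈ S) {s : ℝ} (hs : s ∈ Icc (0:ℝ) 1) :
    |f1 u s - f1 v s| ≤ ((1/6) * s + (π/3 + 2/3)) * dist u v := by
  obtain ⟨hu1, hu2, hu3, hu4⟩ := P_bounds hu s
  obtain ⟨hv1, hv2, hv3, hv4⟩ := P_bounds hv s
  have hA := frac_diff hs.1 hu3 hv3
  have hB := lip_xatan ⟨hu1, hu2⟩ ⟨hv1, hv2⟩
  have hx := diff_comp1 u v s
  have hz := diff_comp2 u v s
  have harc0 : (0:ℝ) ≤ π/3 + 1/2 := by positivity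
  have h1 : |f1 u s - f1 v s| ≤ ((s+1)/6) * |(P u s).2 - (P v s).2|
      + (π/3 + 1/2) * |(P u s).1 - (P v s).1| := by
    rw [f1, f1]
    calc |(s + 1) / ((P u s).2 / 6 + 1) + (P u s).1 * arctan (P u s).1
        - ((s + 1) / ((P v s).2 / 6 + 1) + (P v s).1 * arctan (P v s).1)|
        ≤ |(s + 1) / ((P u s).2 / 6 + 1) - (s + 1) / ((P v s).2 / 6 + 1)|
          + |(P u s).1 * arctan (P u s).1 - (P v s).1 * arctan (P v s).1| := by
          have := abs_add_le ((s + 1) / ((P u s).2 / 6 + 1) - (s + 1) / ((P v s).2 / 6 + 1))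
            ((P u s).1 * arctan (P u s).1 - (P v s).1 * arctan (P v s).1)
          calc _ = |(s + 1) / ((P u s).2 / 6 + 1) - (s + 1) / ((P v s).2 / 6 + 1)
            + ((P u s).1 * arctan (P u s).1 - (P v s).1 * arctan (P v s).1)| := by ring_nf
          _ ≤ _ := this
      _ ≤ _ := by exact add_le_add hA hB
  have hd0 : 0 ≤ dist u v := dist_nonneg
  calc |f1 u s - f1 v s|
      ≤ ((s+1)/6) * |(P u s).2 - (P v s).2| + (π/3 + 1/2) * |(P u s).1 - (P v s).1| := h1
    _ ≤ ((s+1)/6) * dist u v + (π/3 + 1/2) * dist u v := by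
        apply add_le_add
        · exact mul_le_mul_of_nonneg_left hz (by linarith [hs.1])
        · exact mul_le_mul_of_nonneg_left hx harc0
    _ = ((1/6) * s + (1/6 + π/3 + 1/2)) * dist u v := by ring
    _ ≤ ((1/6) * s + (π/3 + 2/3)) * dist u v := by
        apply mul_le_mul_of_nonneg_right _ hd0
        linarith

lemma f2_diff {u v : B} (hu : u ∈ S) (hv : v ∈ S) {s : ℝ} (hs : s ∈ Icc (0:ℝ) 1) (hs1 : s < 1) :
    |f2 u s - f2 v s| ≤ (3 * s + ((1/Real.sqrt 3) / Real.sqrt (1 - s))) * dist u v := by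
  obtain ⟨hu1, hu2, hu3, hu4⟩ := P_bounds hu s
  obtain ⟨hv1, hv2, hv3, hv4⟩ := P_bounds hv s
  have hx := diff_comp1 u v s
  have hz := diff_comp2 u v s
  have hd0 : 0 ≤ dist u v := dist_nonneg
  -- sigmoid part
  have hsig := lip_sig (mem_Ici.2 hu1) (mem_Ici.2 hv1)
  have hA : |6 * s / (Real.exp (-(P u s).1) + 1) - 6 * s / (Real.exp (-(P v s).1) + 1)|
      ≤ 3 * s * dist u v := by
    have heq : 6 * s / (Real.exp (-(P u s).1) + 1) - 6 * s / (Real.exp (-(P v s).1) + 1)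
        = 6 * s * (1 / (Real.exp (-(P u s).1) + 1) - 1 / (Real.exp (-(P v s).1) + 1)) := by
      ring
    rw [heq, abs_mul, abs_of_nonneg (by linarith [hs.1] : (0:ℝ) ≤ 6 * s)]
    calc 6 * s * |1 / (Real.exp (-(P u s).1) + 1) - 1 / (Real.exp (-(P v s).1) + 1)|
        ≤ 6 * s * ((1/2) * |(P u s).1 - (P v s).1|) := by
          apply mul_le_mul_of_nonneg_left hsig (by linarith [hs.1])
      _ ≤ 3 * s * dist u v := by nlinarith [hs.1, abs_nonneg ((P u s).1 - (P v s).1)]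
  -- sqrt part
  have hs3lt : s^3 < 1 := by nlinarith [hs.1, sq_nonneg s, sq_nonneg (1+s)]
  have hm : (0:ℝ) < (1 - s^3)/12 := by linarith
  have hmu : (1 - s^3)/12 ≤ (P u s).2 / 6 := by
    have := P_low hu hs; linarith
  have hmv : (1 - s^3)/12 ≤ (P v s).2 / 6 := by
    have := P_low hv hs; linarith
  have hsd := sqrt_diff_le hm hmu hmv
  have hB : |2 * Real.sqrt ((P u s).2/6) - 2 * Real.sqrt ((P v s).2/6)|
      ≤ ((1/Real.sqrt 3) / Real.sqrt (1 - s)) * dist u v := by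
    have h36 : Real.sqrt 3 * Real.sqrt (1 - s) ≤ 6 * Real.sqrt ((1 - s^3)/12) := by
      rw [← Real.sqrt_mul (by norm_num : (0:ℝ) ≤ 3),
          show (6:ℝ) = Real.sqrt 36 by rw [show (36:ℝ) = 6^2 by norm_num, Real.sqrt_sq]; norm_num,
          ← Real.sqrt_mul (by norm_num : (0:ℝ) ≤ 36)]
      apply Real.sqrt_le_sqrt
      nlinarith [hs.1, hs.2, pow_le_one₀ hs.1 hs.2 (n := 3), sq_nonneg s,
        mul_nonneg hs.1 (sq_nonneg (1 - s))]
    have hs3 : (0:ℝ) < Real.sqrt 3 := Real.sqrt_pos.2 (by norm_num)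
    have hs1s : (0:ℝ) < Real.sqrt (1 - s) := Real.sqrt_pos.2 (by linarith)
    have hsm : (0:ℝ) < Real.sqrt ((1 - s^3)/12) := Real.sqrt_pos.2 hm
    have heq : 2 * Real.sqrt ((P u s).2/6) - 2 * Real.sqrt ((P v s).2/6)
        = 2 * (Real.sqrt ((P u s).2/6) - Real.sqrt ((P v s).2/6)) := by ring
    rw [heq, abs_mul, abs_of_nonneg (by norm_num : (0:ℝ) ≤ (2:ℝ))]
    have hzz : |(P u s).2/6 - (P v s).2/6| ≤ dist u v / 6 := by
      have : (P u s).2/6 - (P v s).2/6 = ((P u s).2 - (P v s).2)/6 := by ring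
      rw [this, abs_div, abs_of_pos (by norm_num : (0:ℝ) < (6:ℝ))]
      linarith
    calc 2 * |Real.sqrt ((P u s).2/6) - Real.sqrt ((P v s).2/6)|
        ≤ 2 * (|(P u s).2/6 - (P v s).2/6| / (2 * Real.sqrt ((1 - s^3)/12))) := by
          apply mul_le_mul_of_nonneg_left hsd (by norm_num)
      _ ≤ 2 * ((dist u v / 6) / (2 * Real.sqrt ((1 - s^3)/12))) := by
          apply mul_le_mul_of_nonneg_left _ (by norm_num)
          apply div_le_div_of_nonneg_right hzz (by nlinarith [hsm])
      _ = dist u v / (6 * Real.sqrt ((1 - s^3)/12)) := by ring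
      _ ≤ dist u v / (Real.sqrt 3 * Real.sqrt (1 - s)) := by
          apply div_le_div_of_nonneg_left hd0 (by nlinarith [hs3, hs1s]) h36
      _ = ((1/Real.sqrt 3) / Real.sqrt (1 - s)) * dist u v := by
          field_simp
  calc |f2 u s - f2 v s|
      ≤ |6 * s / (Real.exp (-(P u s).1) + 1) - 6 * s / (Real.exp (-(P v s).1) + 1)|
        + |2 * Real.sqrt ((P u s).2/6) - 2 * Real.sqrt ((P v s).2/6)| := by
        rw [f2, f2]
        have := abs_add_le (6 * s / (Real.exp (-(P u s).1) + 1) - 6 * s / (Real.exp (-(P v s).1) + 1))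
          (2 * Real.sqrt ((P u s).2/6) - 2 * Real.sqrt ((P v s).2/6))
        calc _ = |6 * s / (Real.exp (-(P u s).1) + 1) - 6 * s / (Real.exp (-(P v s).1) + 1)
          + (2 * Real.sqrt ((P u s).2/6) - 2 * Real.sqrt ((P v s).2/6))| := by ring_nf
        _ ≤ _ := this
    _ ≤ 3 * s * dist u v + ((1/Real.sqrt 3) / Real.sqrt (1 - s)) * dist u v := add_le_add hA hB
    _ = (3 * s + ((1/Real.sqrt 3) / Real.sqrt (1 - s))) * dist u v := by ring


lemma G1_diff {u v : B} (hu : u ∈ S) (hv : v ∈ S) {σ : ℝ} (hσ : σ ∈ Icc (0:ℝ) 1) :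
    |G1 u σ - G1 v σ| ≤ (dist u v / 6) * σ^2 / 2 + ((π/3 + 2/3) * dist u v) * σ := by
  have hsub : G1 u σ - G1 v σ = ∫ s in (0:ℝ)..σ, (f1 u s - f1 v s) := by
    rw [G1, G1, intervalIntegral.integral_sub ((cont_f1 hu).intervalIntegrable _ _)
      ((cont_f1 hv).intervalIntegrable _ _)]
  rw [hsub, ← Real.norm_eq_abs]
  calc ‖∫ s in (0:ℝ)..σ, (f1 u s - f1 v s)‖
      ≤ ∫ s in (0:ℝ)..σ, ‖f1 u s - f1 v s‖ :=
        intervalIntegral.norm_integral_le_integral_norm hσ.1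
    _ ≤ ∫ s in (0:ℝ)..σ, ((dist u v / 6) * s + (π/3 + 2/3) * dist u v) := by
        apply intervalIntegral.integral_mono_on hσ.1
          (((cont_f1 hu).sub (cont_f1 hv)).norm.intervalIntegrable _ _)
          ((by fun_prop : Continuous fun s : ℝ =>
            (dist u v / 6) * s + (π/3 + 2/3) * dist u v).intervalIntegrable _ _)
        intro s hs
        rw [Real.norm_eq_abs]
        have := f1_diff hu hv ⟨hs.1, hs.2.trans hσ.2⟩
        calc |f1 u s - f1 v s| ≤ ((1/6) * s + (π/3 + 2/3)) * dist u v := this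
          _ = (dist u v / 6) * s + (π/3 + 2/3) * dist u v := by ring
    _ = (dist u v / 6) * σ^2 / 2 + ((π/3 + 2/3) * dist u v) * σ := int_linear _ _ _

lemma V1_diff {u v : B} (hu : u ∈ S) (hv : v ∈ S) {t : ℝ} (ht : t ∈ Icc (0:ℝ) 1) :
    |V1 u t - V1 v t| ≤ (9/10) * dist u v := by
  have hsub : V1 u t - V1 v t = ∫ σ in t..(1:ℝ), (G1 u σ - G1 v σ) := by
    rw [V1, V1, intervalIntegral.integral_sub ((cont_G1 hu).intervalIntegrable _ _)
      ((cont_G1 hv).intervalIntegrable _ _)]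
  have hd0 : 0 ≤ dist u v := dist_nonneg
  rw [hsub, ← Real.norm_eq_abs]
  calc ‖∫ σ in t..(1:ℝ), (G1 u σ - G1 v σ)‖
      ≤ ∫ σ in t..(1:ℝ), ‖G1 u σ - G1 v σ‖ :=
        intervalIntegral.norm_integral_le_integral_norm ht.2
    _ ≤ ∫ σ in t..(1:ℝ), ((dist u v / 12) * σ^2 + ((π/3 + 2/3) * dist u v) * σ) := by
        apply intervalIntegral.integral_mono_on ht.2
          (((cont_G1 hu).sub (cont_G1 hv)).norm.intervalIntegrable _ _)
          ((by fun_prop : Continuous fun σ : ℝ =>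
            (dist u v / 12) * σ^2 + ((π/3 + 2/3) * dist u v) * σ).intervalIntegrable _ _)
        intro σ hσ
        rw [Real.norm_eq_abs]
        have := G1_diff hu hv ⟨ht.1.trans hσ.1, hσ.2⟩
        calc |G1 u σ - G1 v σ| ≤ (dist u v / 6) * σ^2 / 2 + ((π/3 + 2/3) * dist u v) * σ := this
          _ = (dist u v / 12) * σ^2 + ((π/3 + 2/3) * dist u v) * σ := by ring
    _ ≤ (9/10) * dist u v := by
        rw [int_quad]
        have hπ : π ≤ 3.15 := by linarith [Real.pi_lt_d2]
        have ht0 : 0 ≤ t := ht.1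
        have h3 : 0 ≤ t^3 := pow_nonneg ht0 3
        have h2 : 0 ≤ t^2 := pow_nonneg ht0 2
        have hp0 : 0 < π := Real.pi_pos
        nlinarith [mul_nonneg hd0 h3, mul_nonneg hd0 h2, mul_nonneg (mul_nonneg hd0 h2) hp0.le]

lemma G2_diff {u v : B} (hu : u ∈ S) (hv : v ∈ S) :
    ∀ σ ∈ Icc (0:ℝ) 1, |G2 u σ - G2 v σ|
      ≤ (3/2 * σ^2 + (1/Real.sqrt 3) * (2 - 2 * Real.sqrt (1 - σ))) * dist u v := by
  have hd0 : 0 ≤ dist u v := dist_nonneg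
  have hs3 : (0:ℝ) < Real.sqrt 3 := Real.sqrt_pos.2 (by norm_num)
  apply le_of_Ico
  · exact ((cont_G2 hu).sub (cont_G2 hv)).abs
  · apply Continuous.mul _ continuous_const
    fun_prop
  intro σ hσ
  have hσ0 : (0:ℝ) ≤ σ := hσ.1
  have hσ1 : σ < 1 := hσ.2
  have hsub : G2 u σ - G2 v σ = ∫ s in (0:ℝ)..σ, (f2 u s - f2 v s) := by
    rw [G2, G2, intervalIntegral.integral_sub ((cont_f2 hu).intervalIntegrable _ _)
      ((cont_f2 hv).intervalIntegrable _ _)]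
  have hco : ContinuousOn (fun s : ℝ => dist u v * (3 * s + (1/Real.sqrt 3) / Real.sqrt (1 - s)))
      (uIcc (0:ℝ) σ) := by
    apply ContinuousOn.mul continuousOn_const
    rw [uIcc_of_le hσ0]
    apply ContinuousOn.add (by fun_prop)
    apply ContinuousOn.div continuousOn_const (by fun_prop)
    intro x hx
    exact (Real.sqrt_pos.2 (by rcases hx with ⟨_, h2⟩; linarith)).ne'
  rw [hsub, ← Real.norm_eq_abs]
  calc ‖∫ s in (0:ℝ)..σ, (f2 u s - f2 v s)‖
      ≤ ∫ s in (0:ℝ)..σ, ‖f2 u s - f2 v s‖ :=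
        intervalIntegral.norm_integral_le_integral_norm hσ0
    _ ≤ ∫ s in (0:ℝ)..σ, (dist u v * (3 * s + (1/Real.sqrt 3) / Real.sqrt (1 - s))) := by
        apply intervalIntegral.integral_mono_on hσ0
          (((cont_f2 hu).sub (cont_f2 hv)).norm.intervalIntegrable _ _)
          (hco.intervalIntegrable)
        intro s hs
        rw [Real.norm_eq_abs]
        have := f2_diff hu hv ⟨hs.1, (hs.2.trans hσ1.le)⟩ (lt_of_le_of_lt hs.2 hσ1)
        calc |f2 u s - f2 v s| ≤ (3 * s + ((1/Real.sqrt 3) / Real.sqrt (1 - s))) * dist u v := this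
          _ = dist u v * (3 * s + (1/Real.sqrt 3) / Real.sqrt (1 - s)) := by ring
    _ = dist u v * ∫ s in (0:ℝ)..σ, (3 * s + (1/Real.sqrt 3) / Real.sqrt (1 - s)) :=
        intervalIntegral.integral_const_mul _ _
    _ = (3/2 * σ^2 + (1/Real.sqrt 3) * (2 - 2 * Real.sqrt (1 - σ))) * dist u v := by
        rw [int_inner_sqrt hσ0 hσ1]
        ring

lemma V2_diff {u v : B} (hu : u ∈ S) (hv : v ∈ S) {t : ℝ} (ht : t ∈ Icc (0:ℝ) 1) :
    |V2 u t - V2 v t| ≤ (9/10) * dist u v := by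
  have hd0 : 0 ≤ dist u v := dist_nonneg
  have hs3 : (0:ℝ) < Real.sqrt 3 := Real.sqrt_pos.2 (by norm_num)
  have hsub : V2 u t - V2 v t = ∫ σ in t..(1:ℝ), (G2 u σ - G2 v σ) := by
    rw [V2, V2, intervalIntegral.integral_sub ((cont_G2 hu).intervalIntegrable _ _)
      ((cont_G2 hv).intervalIntegrable _ _)]
  rw [hsub, ← Real.norm_eq_abs]
  calc ‖∫ σ in t..(1:ℝ), (G2 u σ - G2 v σ)‖
      ≤ ∫ σ in t..(1:ℝ), ‖G2 u σ - G2 v σ‖ :=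
        intervalIntegral.norm_integral_le_integral_norm ht.2
    _ ≤ ∫ σ in t..(1:ℝ), ((3/2 * σ^2 + (1/Real.sqrt 3) * (2 - 2 * Real.sqrt (1 - σ))) * dist u v) := by
        apply intervalIntegral.integral_mono_on ht.2
          (((cont_G2 hu).sub (cont_G2 hv)).norm.intervalIntegrable _ _)
          (((by fun_prop : Continuous fun σ : ℝ =>
            (3/2 * σ^2 + (1/Real.sqrt 3) * (2 - 2 * Real.sqrt (1 - σ)))).mul
              continuous_const).intervalIntegrable _ _)
        intro σ hσ
        rw [Real.norm_eq_abs]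
        exact G2_diff hu hv σ ⟨ht.1.trans hσ.1, hσ.2⟩
    _ = (∫ σ in t..(1:ℝ), (3/2 * σ^2 + (1/Real.sqrt 3) * (2 - 2 * Real.sqrt (1 - σ)))) * dist u v := by
        rw [← intervalIntegral.integral_mul_const]
    _ ≤ (9/10) * dist u v := by
        apply mul_le_mul_of_nonneg_right _ hd0
        have hsplit : ∫ σ in t..(1:ℝ), (3/2 * σ^2 + (1/Real.sqrt 3) * (2 - 2 * Real.sqrt (1 - σ)))
            = (∫ σ in t..(1:ℝ), ((3/2) * σ^2 + 0 * σ))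
              + (1/Real.sqrt 3) * ∫ σ in t..(1:ℝ), (2 - 2 * Real.sqrt (1 - σ)) := by
          rw [← intervalIntegral.integral_const_mul,
            ← intervalIntegral.integral_add
              ((by fun_prop : Continuous fun σ : ℝ => (3/2) * σ^2 + 0 * σ).intervalIntegrable _ _)
              ((by fun_prop : Continuous fun σ : ℝ =>
                (1/Real.sqrt 3) * (2 - 2 * Real.sqrt (1 - σ))).intervalIntegrable _ _)]
          congr 1
          funext σ
          ring
        rw [hsplit, int_quad]
        have h1 : ∫ σ in t..(1:ℝ), (2 - 2 * Real.sqrt (1 - σ)) ≤ 2/3 := int_sqrt_main ht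
        have h2 : (0:ℝ) ≤ ∫ σ in t..(1:ℝ), (2 - 2 * Real.sqrt (1 - σ)) := by
          apply intervalIntegral.integral_nonneg ht.2
          intro σ hσ
          have : Real.sqrt (1 - σ) ≤ 1 := Real.sqrt_le_one.2 (by linarith [hσ.1, ht.1])
          linarith
        have h53 : (5/3 : ℝ) ≤ Real.sqrt 3 := by
          rw [show (5/3:ℝ) = Real.sqrt ((5/3)^2) from (Real.sqrt_sq (by norm_num)).symm]
          exact Real.sqrt_le_sqrt (by norm_num)
        have hrec : (1:ℝ)/Real.sqrt 3 ≤ 3/5 := by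
          rw [div_le_iff₀ hs3]
          nlinarith
        have ht3 : 0 ≤ t^3 := pow_nonneg ht.1 3
        have hq : (1/Real.sqrt 3) * ∫ σ in t..(1:ℝ), (2 - 2 * Real.sqrt (1 - σ)) ≤ (3/5) * (2/3) := by
          apply mul_le_mul hrec h1 h2 (by norm_num)
        nlinarith

/-! ### the operator T -/

lemma T_norm_bound {u : B} (hu : u ∈ S) (t : ℝ) :
    ‖((V1 u (cl t), V2 u (cl t)) : ℝ × ℝ)‖ ≤ 6 := by
  rw [Prod.norm_def]
  have h1 := V1_low hu (cl_mem t)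
  have h2 := V1_up hu (cl_mem t)
  have h3 := V2_low hu (cl_mem t)
  have h4 := V2_up hu (cl_mem t)
  have h5 : (0:ℝ) ≤ (1 - (cl t)^3)/2 := by
    nlinarith [pow_le_one₀ (cl_mem t).1 (cl_mem t).2 (n := 3)]
  apply max_le
  · rw [Real.norm_eq_abs, abs_of_nonneg h1]; linarith
  · rw [Real.norm_eq_abs, abs_of_nonneg (h5.trans h3)]; linarith

def T (u : {v : B // v ∈ S}) : {v : B // v ∈ S} := by
  refine ⟨BoundedContinuousFunction.ofNormedAddCommGroup
    (fun t => ((V1 u.1 (cl t), V2 u.1 (cl t)) : ℝ × ℝ)) ?_ 6 (T_norm_bound u.2), ?_⟩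
  · exact ((cont_V1 u.2).comp continuous_cl).prodMk ((cont_V2 u.2).comp continuous_cl)
  · intro t ht
    simp only [BoundedContinuousFunction.coe_ofNormedAddCommGroup]
    rw [cl_eq ht]
    exact ⟨V1_low u.2 ht, V1_up u.2 ht, V2_low u.2 ht, V2_up u.2 ht⟩

lemma T_apply (u : {v : B // v ∈ S}) (t : ℝ) :
    (T u).1 t = ((V1 u.1 (cl t), V2 u.1 (cl t)) : ℝ × ℝ) := by
  simp only [T, BoundedContinuousFunction.coe_ofNormedAddCommGroup]

lemma S_closed : IsClosed S := by
  have : S = ⋂ (t : ℝ) (_ : t ∈ Icc (0:ℝ) 1),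
      ((fun u : B => u t) ⁻¹' (Icc (0:ℝ) (3/2) ×ˢ Icc ((1 - t^3)/2) 6)) := by
    ext u
    simp only [S, mem_setOf_eq, mem_iInter, mem_preimage, mem_prod, mem_Icc]
    constructor
    · intro h t ht
      obtain ⟨a, b, c, d⟩ := h t ht
      exact ⟨⟨a, b⟩, c, d⟩
    · intro h t ht
      obtain ⟨⟨a, b⟩, c, d⟩ := h t ht
      exact ⟨a, b, c, d⟩
  rw [this]
  apply isClosed_iInter
  intro t
  apply isClosed_iInter
  intro _
  exact (isClosed_Icc.prod isClosed_Icc).preimage (continuous_eval_const t)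

lemma T_contracting : ContractingWith (9/10 : NNReal) T := by
  constructor
  · rw [← NNReal.coe_lt_coe]
    push_cast
    norm_num
  · apply LipschitzWith.of_dist_le_mul
    intro u v
    have hco : ((9/10 : NNReal) : ℝ) = 9/10 := by push_cast; norm_num
    rw [Subtype.dist_eq, hco]
    have hC : (0:ℝ) ≤ 9/10 * dist (u:B) (v:B) := by positivity
    refine (BoundedContinuousFunction.dist_le hC).2 ?_
    intro t
    rw [T_apply, T_apply, Prod.dist_eq]
    apply max_le
    · rw [Real.dist_eq]
      exact V1_diff u.2 v.2 (cl_mem t)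
    · rw [Real.dist_eq]
      exact V2_diff u.2 v.2 (cl_mem t)

lemma S_nonempty : (BoundedContinuousFunction.const ℝ ((0:ℝ), (6:ℝ))) ∈ S := by
  intro t ht
  simp only [BoundedContinuousFunction.const_apply]
  refine ⟨le_refl _, by norm_num, ?_, by norm_num⟩
  have : 0 ≤ t^3 := pow_nonneg ht.1 3
  norm_num
  linarith

lemma exists_fixed : ∃ u : B, u ∈ S ∧ ∀ t, u t = ((V1 u (cl t), V2 u (cl t)) : ℝ × ℝ) := by
  haveI : Nonempty {v : B // v ∈ S} := ⟨⟨_, S_nonempty⟩⟩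
  haveI : CompleteSpace {v : B // v ∈ S} := S_closed.completeSpace_coe
  set fp := T_contracting.fixedPoint T with hfpdef
  have hfix : T fp = fp := T_contracting.fixedPoint_isFixedPt
  refine ⟨fp.1, fp.2, fun t => ?_⟩
  conv_lhs => rw [show (fp : B) = (T fp).1 from congrArg Subtype.val hfix.symm]
  rw [T_apply]

/-- second within-derivative equals the plain second derivative on Icc -/
lemma iter2_eq {f : ℝ → ℝ} (hf : Differentiable ℝ f) (hf' : Differentiable ℝ (deriv f))
    {t : ℝ} (ht : t ∈ Icc (0:ℝ) 1) :
    iteratedDerivWithin 2 f (Icc (0:ℝ) 1) t = deriv (deriv f) t := by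
  have hud : UniqueDiffOn ℝ (Icc (0:ℝ) 1) := uniqueDiffOn_Icc (by norm_num)
  rw [show (2:ℕ) = 1 + 1 from rfl, iteratedDerivWithin_succ]
  have hEq : ∀ y ∈ Icc (0:ℝ) 1, iteratedDerivWithin 1 f (Icc (0:ℝ) 1) y = deriv f y := by
    intro y hy
    rw [iteratedDerivWithin_one]
    exact (hf y).derivWithin (hud y hy)
  rw [derivWithin_congr hEq (hEq t ht)]
  exact (hf' t).derivWithin (hud t ht)

end Coex
end
end CoexDev

open Coex

theorem concrete_system_coexistence_solution :
    ∃ x y : ℝ → ℝ,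
      ContDiffOn ℝ 2 x (Set.Icc 0 1) ∧ ContDiffOn ℝ 2 y (Set.Icc 0 1) ∧
      (∀ t ∈ Set.Icc (0:ℝ) 1, 0 ≤ x t) ∧ (∀ t ∈ Set.Icc (0:ℝ) 1, 0 ≤ y t) ∧
      (∃ t ∈ Set.Icc (0:ℝ) 1, x t ≠ 0) ∧ (∃ t ∈ Set.Icc (0:ℝ) 1, y t ≠ 0) ∧
      (∀ t ∈ Set.Icc (0:ℝ) 1,
        iteratedDerivWithin 2 x (Set.Icc 0 1) t
          + (t + 1) / (y t + 1) + x t * Real.arctan (x t) = 0) ∧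
      (∀ t ∈ Set.Icc (0:ℝ) 1,
        iteratedDerivWithin 2 y (Set.Icc 0 1) t
          + t / (Real.exp (-(x t)) + 1) + (1 / 3) * Real.sqrt (y t) = 0) ∧
      derivWithin x (Set.Icc 0 1) 0 = 0 ∧ x 1 = 0 ∧
      derivWithin y (Set.Icc 0 1) 0 = 0 ∧ y 1 = 0 := by
  obtain ⟨u, hu, hfp⟩ := Coex.exists_fixed
  have hud : UniqueDiffOn ℝ (Icc (0:ℝ) 1) := uniqueDiffOn_Icc (by norm_num)
  have hP1 : ∀ t ∈ Icc (0:ℝ) 1, (P u t).1 = V1 u t := by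
    intro t ht
    rw [P_eq ht, hfp t, cl_eq ht]
  have hP2 : ∀ t ∈ Icc (0:ℝ) 1, (P u t).2 = V2 u t := by
    intro t ht
    rw [P_eq ht, hfp t, cl_eq ht]
  -- derivative computations
  have hdx : deriv (V1 u) = fun t => -(G1 u t) := funext fun t => (hasDerivAt_V1 hu t).deriv
  have hdx2 : ∀ t, deriv (deriv (V1 u)) t = -(f1 u t) := by
    intro t
    rw [hdx]
    exact ((hasDerivAt_G1 hu t).neg).deriv
  have hdyAt : ∀ t, HasDerivAt (fun t => V2 u t / 6) (-(G2 u t)/6) t := by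
    intro t
    simpa [neg_div] using (hasDerivAt_V2 hu t).div_const 6
  have hdy : deriv (fun t => V2 u t / 6) = fun t => -(G2 u t)/6 :=
    funext fun t => (hdyAt t).deriv
  have hdy2At : ∀ t, HasDerivAt (fun t => -(G2 u t)/6) (-(f2 u t)/6) t := by
    intro t
    exact (hasDerivAt_G2 hu t).neg.div_const 6
  have hdy2 : ∀ t, deriv (deriv (fun t => V2 u t / 6)) t = -(f2 u t)/6 := by
    intro t
    rw [hdy]
    exact (hdy2At t).deriv
  have hdiffx : Differentiable ℝ (V1 u) := fun t => (hasDerivAt_V1 hu t).differentiableAt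
  have hdiffx' : Differentiable ℝ (deriv (V1 u)) := by
    rw [hdx]
    exact fun t => ((hasDerivAt_G1 hu t).neg).differentiableAt
  have hdiffy : Differentiable ℝ (fun t => V2 u t / 6) := fun t => (hdyAt t).differentiableAt
  have hdiffy' : Differentiable ℝ (deriv (fun t => V2 u t / 6)) := by
    rw [hdy]
    exact fun t => (hdy2At t).differentiableAt
  -- smoothness
  have hc1 : ContDiff ℝ 2 (V1 u) := by
    rw [show (2 : WithTop ℕ∞) = 1 + 1 by norm_num, contDiff_succ_iff_deriv]
    refine ⟨hdiffx, by simp, ?_⟩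
    rw [show (1 : WithTop ℕ∞) = 0 + 1 by norm_num, contDiff_succ_iff_deriv]
    refine ⟨hdiffx', by simp, ?_⟩
    rw [contDiff_zero]
    have : deriv (deriv (V1 u)) = fun t => -(f1 u t) := funext hdx2
    rw [this]
    exact (cont_f1 hu).neg
  have hc2 : ContDiff ℝ 2 (fun t => V2 u t / 6) := by
    rw [show (2 : WithTop ℕ∞) = 1 + 1 by norm_num, contDiff_succ_iff_deriv]
    refine ⟨hdiffy, by simp, ?_⟩
    rw [show (1 : WithTop ℕ∞) = 0 + 1 by norm_num, contDiff_succ_iff_deriv]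
    refine ⟨hdiffy', by simp, ?_⟩
    rw [contDiff_zero]
    have : deriv (deriv (fun t => V2 u t / 6)) = fun t => -(f2 u t)/6 := funext hdy2
    rw [this]
    exact ((cont_f2 hu).neg).div_const 6
  have h0mem : (0:ℝ) ∈ Icc (0:ℝ) 1 := by norm_num
  have h1mem : (1:ℝ) ∈ Icc (0:ℝ) 1 := by norm_num
  refine ⟨V1 u, fun t => V2 u t / 6, hc1.contDiffOn, hc2.contDiffOn, ?_, ?_, ?_, ?_, ?_, ?_, ?_, ?_, ?_, ?_⟩
  · exact fun t ht => V1_low hu ht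
  · intro t ht
    have := V2_low hu ht
    have h3 : t^3 ≤ 1 := pow_le_one₀ ht.1 ht.2
    simp only []
    linarith
  · refine ⟨0, h0mem, ?_⟩
    have := V1_zero_low hu
    intro h
    rw [h] at this
    norm_num at this
  · refine ⟨0, h0mem, ?_⟩
    have := V2_low hu h0mem
    simp only []
    intro h
    rw [div_eq_zero_iff] at h
    rcases h with h | h
    · rw [h] at this; norm_num at this
    · norm_num at h
  · intro t ht
    rw [iter2_eq hdiffx hdiffx' ht, hdx2 t]
    simp only [f1]
    rw [hP1 t ht, hP2 t ht]
    ring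
  · intro t ht
    rw [iter2_eq hdiffy hdiffy' ht, hdy2 t]
    simp only [f2]
    rw [hP1 t ht, hP2 t ht]
    ring
  · rw [(hdiffx 0).derivWithin (hud 0 h0mem), hdx]
    simp only [G1, intervalIntegral.integral_same, neg_zero]
  · rw [V1]
    exact intervalIntegral.integral_same
  · rw [(hdiffy 0).derivWithin (hud 0 h0mem), hdy]
    simp only [G2, intervalIntegral.integral_same, neg_zero, zero_div]
  · rw [show (fun t => V2 u t / 6) 1 = V2 u 1 / 6 from rfl, V2]
    rw [intervalIntegral.integral_same]
    norm_num
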